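/- Let (k_n)_{n≥1} be a sequence of positive integers with partial sums s_n = k_1 + ⋯ + k_n (s_0 = 0), and for each index i ≥ 1 let b(i) be the unique n with s_{n−1} < i ≤ s_n. Then the following are equivalent: (1) for all positive integers i, j with i ≤ 3j and j ≤ 3i one has |b(i) − b(j)| ≤ 1 (i.e., the block tridiagonal form with central block sizes k_n covers all support entries of the staircase form with row and column support lengths 3n); (2) for all n ≥ 1, k_{n+1} ≥ 2·(k_1 + ⋯ + k_n). In particular, (2) holds with equality when k_1 = 1 and k_n = 2·3^{n−2} for n ≥ 2. -/

import Mathlib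

/-- Partial sums `s n = k 1 + ⋯ + k n` of a sequence of block sizes (with `s 0 = 0`). -/
def psum (k : ℕ → ℕ) (n : ℕ) : ℕ := ∑ j ∈ Finset.Icc 1 n, k j

/-- The block index `b i` of an index `i ≥ 1`: the unique `n` with `s (n-1) < i ≤ s n`
(realized as the least `n` with `i ≤ s n`). -/
noncomputable def blockIdx (k : ℕ → ℕ) (i : ℕ) : ℕ := sInf {n | i ≤ psum k n}

lemma psum_zero (k : ℕ → ℕ) : psum k 0 = 0 := by simp [psum]

lemma psum_succ (k : ℕ → ℕ) (n : ℕ) : psum k (n+1) = psum k n + k (n+1) := by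
  rw [psum, psum, Finset.sum_Icc_succ_top (by omega)]

lemma psum_mono (k : ℕ → ℕ) {m n : ℕ} (h : m ≤ n) : psum k m ≤ psum k n :=
  Finset.sum_le_sum_of_subset (Finset.Icc_subset_Icc_right h)

lemma self_le_psum (k : ℕ → ℕ) (hk : ∀ n, 1 ≤ n → 1 ≤ k n) (n : ℕ) : n ≤ psum k n := by
  induction n with
  | zero => simp [psum_zero]
  | succ m ih =>
    have := hk (m+1) (by omega)
    rw [psum_succ]; omega

lemma le_psum_blockIdx (k : ℕ → ℕ) (hk : ∀ n, 1 ≤ n → 1 ≤ k n) {i : ℕ} :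
    i ≤ psum k (blockIdx k i) :=
  Nat.sInf_mem (⟨i, self_le_psum k hk i⟩ : Set.Nonempty {n | i ≤ psum k n})

lemma blockIdx_le (k : ℕ → ℕ) {i n : ℕ} (h : i ≤ psum k n) : blockIdx k i ≤ n :=
  Nat.sInf_le h

lemma psum_lt_of_lt_blockIdx (k : ℕ → ℕ) {i m : ℕ} (h : m < blockIdx k i) :
    psum k m < i := by
  by_contra hc
  push_neg at hc
  exact absurd (blockIdx_le k hc) (by omega)

lemma blockIdx_pos (k : ℕ → ℕ) (hk : ∀ n, 1 ≤ n → 1 ≤ k n) {i : ℕ} (hi : 1 ≤ i) :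
    1 ≤ blockIdx k i := by
  by_contra h
  push_neg at h
  have h0 : blockIdx k i = 0 := by omega
  have := le_psum_blockIdx k hk (i := i)
  rw [h0, psum_zero] at this
  omega

/-- The block tridiagonal partition with central block sizes `k n` covers
all support entries of the staircase form with row and column support lengths `3n` (i.e.
`|b i - b j| ≤ 1` whenever `i ≤ 3j` and `j ≤ 3i`) if and only if `k (n+1) ≥ 2 (k 1 + ⋯ + k n)`
for all `n ≥ 1`.  In particular, equality holds when `k 1 = 1` and `k n = 2 * 3^(n-2)` for
`n ≥ 2`. -/
theorem blockTridiagonal_covers_staircase_iff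
    (k : ℕ → ℕ) (hk : ∀ n, 1 ≤ n → 1 ≤ k n) :
    ((∀ i j : ℕ, 1 ≤ i → 1 ≤ j → i ≤ 3 * j → j ≤ 3 * i →
        |(blockIdx k i : ℤ) - (blockIdx k j : ℤ)| ≤ 1) ↔
      (∀ n, 1 ≤ n → 2 * psum k n ≤ k (n + 1))) ∧
    ((k 1 = 1 ∧ ∀ n, 2 ≤ n → k n = 2 * 3 ^ (n - 2)) →
      ∀ n, 1 ≤ n → k (n + 1) = 2 * psum k n) := by
  constructor
  · constructor
    · intro H n hn
      by_contra hc
      push_neg at hc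
      set j := psum k n with hjdef
      set i := psum k (n+1) + 1 with hidef
      have hps := psum_succ k n
      have hj1 : 1 ≤ j := le_trans hn (self_le_psum k hk n)
      have hij : i ≤ 3 * j := by omega
      have hji : j ≤ 3 * i := by omega
      have habs := H i j (by omega) hj1 hij hji
      have hbj : blockIdx k j ≤ n := blockIdx_le k le_rfl
      have hbi : n + 2 ≤ blockIdx k i := by
        by_contra h
        push_neg at h
        have h1 := le_psum_blockIdx k hk (i := i)
        have h2 := psum_mono k (show blockIdx k i ≤ n+1 by omega)
        omega
      have h3 : (blockIdx k i : ℤ) - blockIdx k j ≤ 1 := le_trans (le_abs_self _) habs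
      omega
    · intro H2 i j hi hj hij hji
      have key : ∀ a b : ℕ, 1 ≤ a → 1 ≤ b → a ≤ 3 * b →
          blockIdx k a ≤ blockIdx k b + 1 := by
        intro a b ha hb hab
        by_contra h
        push_neg at h
        have hmb : 1 ≤ blockIdx k b := blockIdx_pos k hk hb
        have h1 : psum k (blockIdx k b + 1) < a := psum_lt_of_lt_blockIdx k (by omega)
        have h2 : b ≤ psum k (blockIdx k b) := le_psum_blockIdx k hk
        have h3 := H2 (blockIdx k b) hmb
        rw [psum_succ] at h1
        omega
      have k1 := key i j hi hj hij
      have k2 := key j i hj hi hji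
      rw [abs_le]
      constructor <;> omega
  · rintro ⟨h1, h2⟩ n hn
    have hs : ∀ m, 1 ≤ m → psum k m = 3 ^ (m - 1) := by
      intro m hm
      induction m, hm using Nat.le_induction with
      | base => simp [psum, h1]
      | succ m hm ih =>
        rw [psum_succ, ih, h2 (m+1) (by omega)]
        have e1 : m + 1 - 2 = m - 1 := by omega
        have e2 : (3:ℕ) ^ (m + 1 - 1) = 3 ^ (m - 1) * 3 := by
          rw [← pow_succ]; congr 1; omega
        rw [e1]
        omega
    rw [h2 (n+1) (by omega), hs n hn]
    have e : n + 1 - 2 = n - 1 := by omega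
    rw [e]
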